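/- arXiv:1404.4339 — 2 statements merged into one kernel-verified Lean document; each statement's English description precedes it below -/
import Mathlib

section
/- Suppose f : (0,b) → (0,∞) is monotone decreasing with ∫₀^b (f(x))^s dx < ∞ for some s > 0. If the first slide derivative ψ₁(f) (the right-hand derivative of σ_f at 0) exists, then ψ₁(f) ≥ 0. -/
open MeasureTheory

/-- The slide function `σ_f(t)` of a function `f` on `(0,b)`:
`σ_f(t) = -1 - ∫₀^b (f(x)^t / A(t)) ln( x · f(x)^t / A(t) ) dx` where
`A(t) = ∫₀^b f(x)^t dx`. -/
noncomputable def slideFun (b : ℝ) (f : ℝ → ℝ) (t : ℝ) : ℝ :=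
  -1 - ∫ x in Set.Ioo (0:ℝ) b,
    (f x ^ t / ∫ y in Set.Ioo (0:ℝ) b, f y ^ t) *
      Real.log (x * (f x ^ t / ∫ y in Set.Ioo (0:ℝ) b, f y ^ t))


section AuxiliaryLemmas

open Set Real Filter ENNReal Topology

set_option maxHeartbeats 1000000

lemma integrableOn_log_Ioo {b : ℝ} (hb : 0 < b) : IntegrableOn Real.log (Set.Ioo 0 b) := by
  have hcont : ContinuousOn (fun x : ℝ => x * Real.log b + x - x * Real.log x) (Set.Icc 0 b) :=
    (((continuous_id.mul continuous_const).add continuous_id).sub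
      Real.continuous_mul_log).continuousOn
  have hder : ∀ x ∈ Set.Ioo (0:ℝ) b,
      HasDerivAt (fun x : ℝ => x * Real.log b + x - x * Real.log x)
        (Real.log b - Real.log x) x := by
    intro x hx
    have h1 : HasDerivAt (fun x : ℝ => x * Real.log b + x) (Real.log b + 1) x := by
      exact (((hasDerivAt_id' x).mul_const (Real.log b)).add (hasDerivAt_id' x)).congr_deriv (by ring)
    have h2 : HasDerivAt (fun x : ℝ => x * Real.log x) (Real.log x + 1) x :=
      Real.hasDerivAt_mul_log hx.1.ne'
    exact (h1.sub h2).congr_deriv (by ring)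
  have hnn : ∀ x ∈ Set.Ioo (0:ℝ) b, 0 ≤ Real.log b - Real.log x := by
    intro x hx
    have := Real.log_le_log hx.1 hx.2.le
    linarith
  have hint : IntegrableOn (fun x => Real.log b - Real.log x) (Set.Ioo 0 b) := by
    rw [← integrableOn_Ioc_iff_integrableOn_Ioo]
    exact intervalIntegral.integrableOn_deriv_of_nonneg
      (g' := fun x => Real.log b - Real.log x) hcont hder hnn
  have : IntegrableOn (fun x => Real.log b - (Real.log b - Real.log x)) (Set.Ioo 0 b) :=
    (integrableOn_const measure_Ioo_lt_top.ne).sub hint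
  exact this.congr_fun (fun x _ => by ring) measurableSet_Ioo

lemma integral_log_Ioo {b : ℝ} (hb : 0 < b) :
    ∫ x in Set.Ioo (0:ℝ) b, Real.log x = b * Real.log b - b := by
  have hcont : ContinuousOn (fun x : ℝ => x * Real.log x - x) (Set.Icc 0 b) :=
    (Real.continuous_mul_log.sub continuous_id).continuousOn
  have hder : ∀ x ∈ Set.Ioo (0:ℝ) b,
      HasDerivWithinAt (fun x : ℝ => x * Real.log x - x) (Real.log x) (Set.Ioi x) x := by
    intro x hx
    have h2 : HasDerivAt (fun x : ℝ => x * Real.log x - x) (Real.log x) x := by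
      exact ((Real.hasDerivAt_mul_log hx.1.ne').sub (hasDerivAt_id' x)).congr_deriv (by ring)
    exact h2.hasDerivWithinAt
  have hii : IntervalIntegrable Real.log volume 0 b := by
    rw [intervalIntegrable_iff_integrableOn_Ioc_of_le hb.le,
      integrableOn_Ioc_iff_integrableOn_Ioo]
    exact integrableOn_log_Ioo hb
  have := intervalIntegral.integral_eq_sub_of_hasDeriv_right_of_le hb.le hcont hder hii
  rw [intervalIntegral.integral_of_le hb.le, MeasureTheory.integral_Ioc_eq_integral_Ioo] at this
  simpa using this

lemma key_ineq {b : ℝ} (hb : 0 < b) (g : ℝ → ℝ)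
    (hanti : AntitoneOn g (Set.Ioo 0 b)) (hgpos : ∀ x ∈ Set.Ioo (0:ℝ) b, 0 < g x)
    (hgint : IntegrableOn g (Set.Ioo 0 b)) (hone : (∫ x in Set.Ioo (0:ℝ) b, g x) = 1)
    (hF : IntegrableOn (fun x => g x * Real.log (x * g x)) (Set.Ioo 0 b)) :
    (∫ x in Set.Ioo (0:ℝ) b, g x * Real.log (x * g x)) ≤ -1 := by
  have hsm : MeasurableSet (Set.Ioo (0:ℝ) b) := measurableSet_Ioo
  set g0 : ℝ → ℝ := (Set.Ioo (0:ℝ) b).indicator g with hg0def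
  have hg0int : Integrable g0 := (integrable_indicator_iff hsm).2 hgint
  have hg0nn : ∀ x, 0 ≤ g0 x :=
    fun x => Set.indicator_nonneg (fun y hy => (hgpos y hy).le) x
  set G : ℝ → ℝ := fun x => ∫ y in (0:ℝ)..x, g0 y with hGdef
  have hGcont : Continuous G := hg0int.continuous_primitive 0
  have hGmono : Monotone G := by
    intro x y hxy
    have h1 : G x + ∫ t in x..y, g0 t = G y :=
      intervalIntegral.integral_add_adjacent_intervals
        hg0int.intervalIntegrable hg0int.intervalIntegrable
    have h2 : 0 ≤ ∫ t in x..y, g0 t :=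
      intervalIntegral.integral_nonneg hxy (fun u _ => hg0nn u)
    linarith
  have hGval : ∀ x1, 0 ≤ x1 → x1 ≤ b → G x1 = ∫ y in Set.Ioo (0:ℝ) x1, g y := by
    intro x1 h0 h1
    have : G x1 = ∫ y in Set.Ioo (0:ℝ) x1, g0 y := by
      rw [hGdef]
      simp only [intervalIntegral.integral_of_le h0, MeasureTheory.integral_Ioc_eq_integral_Ioo]
    rw [this, hg0def, MeasureTheory.setIntegral_indicator hsm,
      Set.inter_eq_left.2 (Set.Ioo_subset_Ioo_right h1)]
  have hG0 : G 0 = 0 := intervalIntegral.integral_same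
  have hGb : G b = 1 := by rw [hGval b hb.le le_rfl]; exact hone
  -- step A : x * g x ≤ G x on Ioo 0 b
  have hxg : ∀ x ∈ Set.Ioo (0:ℝ) b, x * g x ≤ G x := by
    intro x hx
    rw [hGval x hx.1.le hx.2.le]
    have hsub : Set.Ioo (0:ℝ) x ⊆ Set.Ioo (0:ℝ) b := Set.Ioo_subset_Ioo_right hx.2.le
    have hmono : (∫ y in Set.Ioo (0:ℝ) x, (fun _ => g x) y) ≤ ∫ y in Set.Ioo (0:ℝ) x, g y := by
      refine setIntegral_mono_on (integrableOn_const measure_Ioo_lt_top.ne)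
        (hgint.mono_set hsub) measurableSet_Ioo ?_
      exact fun y hy => hanti (hsub hy) hx hy.2.le
    simpa [Real.volume_Ioo, ENNReal.toReal_ofReal hx.1.le, mul_comm, max_eq_left hx.1.le] using hmono
  have hGpos : ∀ x ∈ Set.Ioo (0:ℝ) b, 0 < G x :=
    fun x hx => lt_of_lt_of_le (mul_pos hx.1 (hgpos x hx)) (hxg x hx)
  have hGle1 : ∀ x, x ≤ b → G x ≤ 1 := fun x h => hGb ▸ hGmono h
  -- the nonnegative function Ψ = g * (- log G)
  set Ψ : ℝ → ℝ := fun x => g x * (-Real.log (G x)) with hΨdef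
  have hΨnn : ∀ x ∈ Set.Ioo (0:ℝ) b, 0 ≤ Ψ x := by
    intro x hx
    have := Real.log_nonpos (hGpos x hx).le (hGle1 x hx.2.le)
    exact mul_nonneg (hgpos x hx).le (by linarith)
  have hFΨ : ∀ x ∈ Set.Ioo (0:ℝ) b, g x * Real.log (x * g x) ≤ -Ψ x := by
    intro x hx
    have hlog : Real.log (x * g x) ≤ Real.log (G x) :=
      Real.log_le_log (mul_pos hx.1 (hgpos x hx)) (hxg x hx)
    have := mul_le_mul_of_nonneg_left hlog (hgpos x hx).le
    simpa [hΨdef, mul_comm, neg_neg, mul_neg] using this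
  have hΨm : AEStronglyMeasurable Ψ (volume.restrict (Set.Ioo (0:ℝ) b)) := by
    exact hgint.aestronglyMeasurable.mul
      ((Real.measurable_log.comp hGcont.measurable).neg.aestronglyMeasurable)
  have hΨint : IntegrableOn Ψ (Set.Ioo (0:ℝ) b) := by
    refine MeasureTheory.Integrable.mono hF hΨm ?_
    filter_upwards [ae_restrict_mem hsm] with x hx
    have h1 := hFΨ x hx
    have h2 := hΨnn x hx
    rw [Real.norm_eq_abs, Real.norm_eq_abs, abs_of_nonneg h2,
      abs_of_nonpos (by linarith : g x * Real.log (x * g x) ≤ 0)]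
    linarith
  have hstep1 : (∫ x in Set.Ioo (0:ℝ) b, g x * Real.log (x * g x))
      ≤ ∫ x in Set.Ioo (0:ℝ) b, -Ψ x :=
    setIntegral_mono_on hF hΨint.neg hsm hFΨ
  -- Main estimate : 1 ≤ ∫ Ψ
  have hmain : (1:ℝ) ≤ ∫ x in Set.Ioo (0:ℝ) b, Ψ x := by
    classical
    set S : Set (ℝ × ℝ) := {p : ℝ × ℝ | G p.1 < p.2 ∧ p.2 ≤ 1} with hSdef
    have hSmeas : MeasurableSet S := by
      have h1 : MeasurableSet {p : ℝ × ℝ | G p.1 < p.2} :=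
        (isOpen_lt (hGcont.comp continuous_fst) continuous_snd).measurableSet
      have h2 : MeasurableSet {p : ℝ × ℝ | p.2 ≤ 1} :=
        measurableSet_le measurable_snd measurable_const
      exact h1.inter h2
    set k : ℝ → ℝ → ℝ≥0∞ := fun x u =>
      S.indicator (fun p => ENNReal.ofReal (1 / p.2)) (x, u) * ENNReal.ofReal (g x) with hkdef
    have hkmeas : AEMeasurable (Function.uncurry k)
        ((volume.restrict (Set.Ioo (0:ℝ) b)).prod volume) := by
      have h1 : Measurable fun p : ℝ × ℝ => S.indicator (fun p => ENNReal.ofReal (1 / p.2)) p :=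
        ((measurable_const.div measurable_snd).ennreal_ofReal).indicator hSmeas
      have h2 : AEMeasurable (fun p : ℝ × ℝ => ENNReal.ofReal (g p.1))
          ((volume.restrict (Set.Ioo (0:ℝ) b)).prod volume) :=
        (hgint.aemeasurable.ennreal_ofReal).comp_fst
      exact h1.aemeasurable.mul h2
    have hswap := MeasureTheory.lintegral_lintegral_swap hkmeas
    have hinner : ∀ x ∈ Set.Ioo (0:ℝ) b, (∫⁻ u, k x u) = ENNReal.ofReal (Ψ x) := by
      intro x hx
      have hGx1 : G x ≤ 1 := hGle1 x hx.2.le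
      have hGx0 : 0 < G x := hGpos x hx
      have hlognn : 0 ≤ -Real.log (G x) := by
        have := Real.log_nonpos hGx0.le hGx1; linarith
      have e1 : ∀ u : ℝ, k x u
          = (Set.Ioc (G x) 1).indicator (fun u => ENNReal.ofReal (1 / u)) u
            * ENNReal.ofReal (g x) := by
        intro u
        by_cases hu : u ∈ Set.Ioc (G x) 1
        · have hmem : (x, u) ∈ S := ⟨hu.1, hu.2⟩
          rw [hkdef]
          simp only [Set.indicator_of_mem hmem, Set.indicator_of_mem hu]
        · have hnmem : (x, u) ∉ S := fun h => hu ⟨h.1, h.2⟩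
          rw [hkdef]
          simp only [Set.indicator_of_notMem hnmem, Set.indicator_of_notMem hu, zero_mul]
      have hii : IntervalIntegrable (fun u : ℝ => 1 / u) volume (G x) 1 := by
        refine intervalIntegral.intervalIntegrable_one_div (fun u hu => ?_) continuousOn_id
        rw [Set.uIcc_of_le hGx1] at hu
        exact (lt_of_lt_of_le hGx0 hu.1).ne'
      have hio : IntegrableOn (fun u : ℝ => 1 / u) (Set.Ioc (G x) 1) :=
        (intervalIntegrable_iff_integrableOn_Ioc_of_le hGx1).1 hii
      have hnn' : 0 ≤ᵐ[volume.restrict (Set.Ioc (G x) 1)] (fun u : ℝ => 1 / u) :=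
        (ae_restrict_iff' measurableSet_Ioc).2 (ae_of_all _ fun u hu => by
          have : 0 < u := lt_trans hGx0 hu.1
          positivity)
      have hval : (∫ u in Set.Ioc (G x) 1, 1 / u) = -Real.log (G x) := by
        rw [← intervalIntegral.integral_of_le hGx1]
        rw [integral_one_div (by
          rw [Set.uIcc_of_le hGx1]
          intro h
          exact absurd h.1 (not_le.2 hGx0))]
        rw [one_div, Real.log_inv]
      have hlint : (∫⁻ u in Set.Ioc (G x) 1, ENNReal.ofReal (1 / u))
          = ENNReal.ofReal (-Real.log (G x)) := by
        rw [← MeasureTheory.ofReal_integral_eq_lintegral_ofReal hio hnn', hval]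
      calc (∫⁻ u, k x u)
          = ∫⁻ u, (Set.Ioc (G x) 1).indicator (fun u => ENNReal.ofReal (1 / u)) u
              * ENNReal.ofReal (g x) := by simp only [e1]
        _ = (∫⁻ u, (Set.Ioc (G x) 1).indicator (fun u => ENNReal.ofReal (1 / u)) u)
              * ENNReal.ofReal (g x) :=
            lintegral_mul_const' _ _ ENNReal.ofReal_ne_top
        _ = (∫⁻ u in Set.Ioc (G x) 1, ENNReal.ofReal (1 / u)) * ENNReal.ofReal (g x) := by
            rw [lintegral_indicator measurableSet_Ioc]
        _ = ENNReal.ofReal (-Real.log (G x)) * ENNReal.ofReal (g x) := by rw [hlint]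
        _ = ENNReal.ofReal (Ψ x) := by
            rw [← ENNReal.ofReal_mul hlognn, hΨdef, mul_comm]
    have houter : (1:ℝ≥0∞) ≤ ∫⁻ u, ∫⁻ x in Set.Ioo (0:ℝ) b, k x u := by
      have h1 : ∀ u ∈ Set.Ioo (0:ℝ) 1, (1:ℝ≥0∞) ≤ ∫⁻ x in Set.Ioo (0:ℝ) b, k x u := by
        intro u hu
        obtain ⟨x1, hx1mem, hGx1⟩ : ∃ x1 ∈ Set.Icc (0:ℝ) b, G x1 = u := by
          have him := intermediate_value_Icc hb.le hGcont.continuousOn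
          have hu' : u ∈ Set.Icc (G 0) (G b) := by rw [hG0, hGb]; exact ⟨hu.1.le, hu.2.le⟩
          exact him hu'
        have hx1pos : 0 < x1 := by
          rcases hx1mem.1.lt_or_eq with h | h
          · exact h
          · exfalso
            rw [← h, hG0] at hGx1
            exact lt_irrefl _ (hGx1 ▸ hu.1)
        have hlt : ∀ x ∈ Set.Ioo (0:ℝ) x1, G x < u := by
          intro x hx
          have hxm : x < (x + x1) / 2 := by linarith [hx.2]
          have hmx1 : (x + x1) / 2 < x1 := by linarith [hx.2]
          have hmb : (x + x1) / 2 < b := lt_of_lt_of_le hmx1 hx1mem.2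
          have hmmem : (x + x1) / 2 ∈ Set.Ioo (0:ℝ) b := ⟨by linarith [hx.1], hmb⟩
          have hsubm : Set.Ioo x ((x + x1) / 2) ⊆ Set.Ioo (0:ℝ) b :=
            fun y hy => ⟨lt_trans hx.1 hy.1, lt_trans hy.2 hmb⟩
          have hGm : G ((x + x1) / 2) - G x = ∫ y in Set.Ioo x ((x + x1) / 2), g y := by
            have h3 : G x + (∫ t in x..((x + x1) / 2), g0 t) = G ((x + x1) / 2) :=
              intervalIntegral.integral_add_adjacent_intervals
                hg0int.intervalIntegrable hg0int.intervalIntegrable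
            have h4 : (∫ t in x..((x + x1) / 2), g0 t)
                = ∫ y in Set.Ioo x ((x + x1) / 2), g y := by
              rw [intervalIntegral.integral_of_le hxm.le,
                MeasureTheory.integral_Ioc_eq_integral_Ioo, hg0def,
                MeasureTheory.setIntegral_indicator hsm, Set.inter_eq_left.2 hsubm]
            linarith
          have hmono2 : (∫ y in Set.Ioo x ((x + x1) / 2), (fun _ => g ((x + x1) / 2)) y)
              ≤ ∫ y in Set.Ioo x ((x + x1) / 2), g y := by
            refine setIntegral_mono_on (integrableOn_const measure_Ioo_lt_top.ne)
              (hgint.mono_set hsubm) measurableSet_Ioo ?_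
            exact fun y hy => hanti (hsubm hy) hmmem hy.2.le
          have hconst : (∫ y in Set.Ioo x ((x + x1) / 2), (fun _ => g ((x + x1) / 2)) y)
              = ((x + x1) / 2 - x) * g ((x + x1) / 2) := by
            simp [Real.volume_Ioo, ENNReal.toReal_ofReal (by linarith : (0:ℝ) ≤ (x + x1) / 2 - x),
              mul_comm, hxm.le]
          have hgm := hgpos _ hmmem
          have hGmle : G ((x + x1) / 2) ≤ u := hGx1 ▸ hGmono hmx1.le
          nlinarith
        have hsub1 : Set.Ioo (0:ℝ) x1 ⊆ Set.Ioo (0:ℝ) b := Set.Ioo_subset_Ioo_right hx1mem.2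
        have hb1 : (∫⁻ x in Set.Ioo (0:ℝ) x1, k x u) ≤ ∫⁻ x in Set.Ioo (0:ℝ) b, k x u :=
          lintegral_mono' (Measure.restrict_mono hsub1 le_rfl) le_rfl
        have heq : (∫⁻ x in Set.Ioo (0:ℝ) x1, k x u)
            = ENNReal.ofReal (1 / u) * ∫⁻ x in Set.Ioo (0:ℝ) x1, ENNReal.ofReal (g x) := by
          rw [← lintegral_const_mul' _ _ ENNReal.ofReal_ne_top]
          refine setLIntegral_congr_fun measurableSet_Ioo (fun x hx => ?_)
          have hmem : (x, u) ∈ S := ⟨hlt x hx, hu.2.le⟩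
          rw [hkdef]
          simp only [Set.indicator_of_mem hmem]
        have heq2 : (∫⁻ x in Set.Ioo (0:ℝ) x1, ENNReal.ofReal (g x)) = ENNReal.ofReal u := by
          rw [← MeasureTheory.ofReal_integral_eq_lintegral_ofReal (hgint.mono_set hsub1)
            ((ae_restrict_iff' measurableSet_Ioo).2
              (ae_of_all _ fun y hy => (hgpos y (hsub1 hy)).le)),
            ← hGval x1 hx1pos.le hx1mem.2, hGx1]
        rw [heq, heq2] at hb1
        refine le_trans (le_of_eq ?_) hb1
        rw [← ENNReal.ofReal_mul (one_div_nonneg.2 hu.1.le), one_div_mul_cancel hu.1.ne',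
          ENNReal.ofReal_one]
      calc (1:ℝ≥0∞) = ∫⁻ _ in Set.Ioo (0:ℝ) 1, (1:ℝ≥0∞) := by
            rw [MeasureTheory.setLIntegral_one, Real.volume_Ioo]; simp
        _ ≤ ∫⁻ u in Set.Ioo (0:ℝ) 1, ∫⁻ x in Set.Ioo (0:ℝ) b, k x u := by
            refine lintegral_mono_ae ?_
            filter_upwards [ae_restrict_mem measurableSet_Ioo] with u hu using h1 u hu
        _ ≤ ∫⁻ u, ∫⁻ x in Set.Ioo (0:ℝ) b, k x u := setLIntegral_le_lintegral _ _
    have hL : (∫⁻ x in Set.Ioo (0:ℝ) b, ∫⁻ u, k x u)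
        = ENNReal.ofReal (∫ x in Set.Ioo (0:ℝ) b, Ψ x) := by
      rw [MeasureTheory.ofReal_integral_eq_lintegral_ofReal hΨint
        ((ae_restrict_iff' hsm).2 (ae_of_all _ hΨnn))]
      exact setLIntegral_congr_fun hsm (fun x hx => hinner x hx)
    have hfin : (1:ℝ≥0∞) ≤ ENNReal.ofReal (∫ x in Set.Ioo (0:ℝ) b, Ψ x) := by
      rw [← hL, hswap]
      exact houter
    exact ENNReal.one_le_ofReal.1 hfin
  have : (∫ x in Set.Ioo (0:ℝ) b, -Ψ x) ≤ -1 := by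
    rw [MeasureTheory.integral_neg]; linarith
  linarith

lemma slideFun_zero {b : ℝ} (hb : 0 < b) (f : ℝ → ℝ) : slideFun b f 0 = 0 := by
  have hA : (∫ y in Set.Ioo (0:ℝ) b, f y ^ (0:ℝ)) = b := by
    simp [Real.rpow_zero, Real.volume_Ioo, ENNReal.toReal_ofReal hb.le, hb.le]
  rw [slideFun, hA]
  have hcong : (∫ x in Set.Ioo (0:ℝ) b, (f x ^ (0:ℝ) / b) * Real.log (x * (f x ^ (0:ℝ) / b)))
      = ∫ x in Set.Ioo (0:ℝ) b, (1 / b) * (Real.log x - Real.log b) := by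
    refine setIntegral_congr_fun measurableSet_Ioo (fun x hx => ?_)
    simp only [Real.rpow_zero]
    rw [Real.log_mul hx.1.ne' (by positivity), one_div, Real.log_inv]
    ring
  rw [hcong, MeasureTheory.integral_const_mul]
  have hsub : (∫ x in Set.Ioo (0:ℝ) b, (Real.log x - Real.log b)) = -b := by
    rw [MeasureTheory.integral_sub (integrableOn_log_Ioo hb)
      (integrableOn_const measure_Ioo_lt_top.ne)]
    rw [integral_log_Ioo hb]
    simp [Real.volume_Ioo, ENNReal.toReal_ofReal hb.le, max_eq_left hb.le]
  rw [hsub]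
  field_simp
  ring

lemma slideFun_dichotomy {b s : ℝ} (hb : 0 < b) (hs : 0 < s) (f : ℝ → ℝ)
    (hmono : AntitoneOn f (Set.Ioo 0 b)) (hpos : ∀ x ∈ Set.Ioo (0:ℝ) b, 0 < f x)
    (hfs : IntegrableOn (fun x => f x ^ s) (Set.Ioo 0 b))
    {t : ℝ} (ht : 0 < t) (hts : t ≤ s) :
    slideFun b f t = -1 ∨ 0 ≤ slideFun b f t := by
  have hsm : MeasurableSet (Set.Ioo (0:ℝ) b) := measurableSet_Ioo
  -- integrability of f ^ t
  have hmeas : AEStronglyMeasurable (fun x => f x ^ t)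
      (volume.restrict (Set.Ioo (0:ℝ) b)) := by
    have hms : AEMeasurable (fun x => f x ^ s) (volume.restrict (Set.Ioo (0:ℝ) b)) :=
      hfs.aemeasurable
    have h2 : AEMeasurable (fun x => (f x ^ s) ^ (t / s))
        (volume.restrict (Set.Ioo (0:ℝ) b)) :=
      (Real.continuous_rpow_const (div_nonneg ht.le hs.le)).measurable.comp_aemeasurable hms
    refine (h2.congr ?_).aestronglyMeasurable
    filter_upwards [ae_restrict_mem hsm] with x hx
    rw [← Real.rpow_mul (hpos x hx).le]
    congr 1
    field_simp
  have hft : IntegrableOn (fun x => f x ^ t) (Set.Ioo 0 b) := by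
    have hdom : IntegrableOn (fun x : ℝ => 1 + f x ^ s) (Set.Ioo 0 b) :=
      (integrableOn_const measure_Ioo_lt_top.ne :
        IntegrableOn (fun _ => (1:ℝ)) (Set.Ioo 0 b) volume).add hfs
    refine MeasureTheory.Integrable.mono' hdom hmeas ?_
    filter_upwards [ae_restrict_mem hsm] with x hx
    rw [Real.norm_eq_abs, abs_of_nonneg (Real.rpow_nonneg (hpos x hx).le t)]
    rcases le_or_gt (f x) 1 with h | h
    · have h1 : f x ^ t ≤ 1 := Real.rpow_le_one (hpos x hx).le h ht.le
      have h2 : 0 ≤ f x ^ s := Real.rpow_nonneg (hpos x hx).le s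
      linarith
    · have h1 : f x ^ t ≤ f x ^ s := Real.rpow_le_rpow_of_exponent_le h.le hts
      linarith
  set A := ∫ y in Set.Ioo (0:ℝ) b, f y ^ t with hAdef
  have hA : 0 < A := by
    rw [hAdef]
    rw [MeasureTheory.setIntegral_pos_iff_support_of_nonneg_ae
      ((ae_restrict_iff' hsm).2 (ae_of_all _ fun x hx => (Real.rpow_pos_of_pos (hpos x hx) t).le))
      hft]
    have hsub2 : Set.Ioo (0:ℝ) b ⊆ (Function.support fun x => f x ^ t) ∩ Set.Ioo 0 b :=
      fun x hx => ⟨(Real.rpow_pos_of_pos (hpos x hx) t).ne', hx⟩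
    calc (0:ℝ≥0∞) < volume (Set.Ioo (0:ℝ) b) := by
          rw [Real.volume_Ioo]; simpa using hb
      _ ≤ _ := measure_mono hsub2
  set g : ℝ → ℝ := fun x => f x ^ t / A with hgdef
  have hσ : slideFun b f t = -1 - ∫ x in Set.Ioo (0:ℝ) b, g x * Real.log (x * g x) := rfl
  by_cases hFint : IntegrableOn (fun x => g x * Real.log (x * g x)) (Set.Ioo 0 b)
  · right
    have hkey := key_ineq hb g
      (fun x hx y hy hxy => by
        exact (div_le_div_iff_of_pos_right hA).2
          (Real.rpow_le_rpow (hpos y hy).le (hmono hx hy hxy) ht.le))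
      (fun x hx => div_pos (Real.rpow_pos_of_pos (hpos x hx) t) hA)
      (hft.div_const A)
      (by rw [MeasureTheory.integral_div, ← hAdef, div_self hA.ne'])
      hFint
    rw [hσ]
    linarith
  · left
    rw [hσ, MeasureTheory.integral_undef hFint]
    ring


/-- If `f : (0,b) → (0,∞)` is monotone decreasing with
`∫₀^b f(x)^s dx < ∞` for some `s > 0`, and the first slide derivative `ψ₁(f)` — the
right-hand derivative of `σ_f` at `0` — exists, then `ψ₁(f) ≥ 0`. -/
theorem first_slide_derivative_nonneg (b s : ℝ) (hb : 0 < b) (hs : 0 < s)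
    (f : ℝ → ℝ) (hmono : AntitoneOn f (Set.Ioo (0:ℝ) b))
    (hpos : ∀ x ∈ Set.Ioo (0:ℝ) b, 0 < f x)
    (hfs : IntegrableOn (fun x => f x ^ s) (Set.Ioo (0:ℝ) b))
    (ψ : ℝ) (hψ : HasDerivWithinAt (slideFun b f) ψ (Set.Ici 0) 0) :
    0 ≤ ψ := by
  by_contra hneg
  push_neg at hneg
  have hσ0 : slideFun b f 0 = 0 := slideFun_zero hb f
  have hslope : Tendsto (slope (slideFun b f) 0) (𝓝[Set.Ioi 0] 0) (𝓝 ψ) := by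
    have h := hasDerivWithinAt_iff_tendsto_slope.1 hψ
    rwa [Set.Ici_sdiff_left] at h
  have h1ψ : 0 < 1 - ψ := by linarith
  have ht0pos : 0 < min s (1 / (1 - ψ)) := lt_min hs (by positivity)
  have hev : ∀ᶠ t in 𝓝[Set.Ioi 0] 0, 0 ≤ slope (slideFun b f) 0 t := by
    have hev1 : ∀ᶠ t in 𝓝[Set.Ioi 0] 0, ψ - 1 < slope (slideFun b f) 0 t :=
      hslope.eventually (eventually_gt_nhds (by linarith))
    have hev2 : ∀ᶠ t in 𝓝[Set.Ioi 0] 0, t < min s (1 / (1 - ψ)) :=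
      eventually_nhdsWithin_of_eventually_nhds (gt_mem_nhds ht0pos)
    filter_upwards [hev1, hev2, eventually_mem_nhdsWithin] with t h1 h2 h3
    have ht : 0 < t := h3
    have hts : t ≤ s := le_of_lt (lt_of_lt_of_le h2 (min_le_left _ _))
    have hslope_eq : slope (slideFun b f) 0 t = slideFun b f t / t := by
      rw [slope_def_field, hσ0, sub_zero, sub_zero]
    rcases slideFun_dichotomy hb hs f hmono hpos hfs ht hts with hcase | hcase
    · exfalso
      rw [hslope_eq, hcase] at h1
      have h4 : t < 1 / (1 - ψ) := lt_of_lt_of_le h2 (min_le_right _ _)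
      have hA : (ψ - 1) * t < -1 := by
        have h6 := mul_lt_mul_of_pos_right h1 ht
        rwa [div_mul_cancel₀ _ ht.ne'] at h6
      have hB : (1 - ψ) * t < 1 := by
        have h6 := mul_lt_mul_of_pos_left h4 h1ψ
        rwa [mul_one_div, div_self h1ψ.ne'] at h6
      linarith
    · rw [hslope_eq]
      exact div_nonneg hcase ht.le
  have : 0 ≤ ψ := ge_of_tendsto hslope hev
  exact hneg.not_ge this

end AuxiliaryLemmas
end

section
/- Suppose f : (0,b) → (0,∞) is monotone decreasing with ∫₀^b (f(x))^s dx < ∞ for some s > 0, and let r > 0. If the n-th slide derivative ψ_n(f) exists, then ψ_n(f^r) exists and ψ_n(f^r) = r^n ψ_n(f). -/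
open MeasureTheory

private lemma slideFun_rpow_eq (b r : ℝ) (f : ℝ → ℝ)
    (hpos : ∀ x ∈ Set.Ioo (0:ℝ) b, 0 < f x) (t : ℝ) :
    slideFun b (fun x => f x ^ r) t = slideFun b f (r * t) := by
  unfold slideFun
  have hA : (∫ y in Set.Ioo (0:ℝ) b, (f y ^ r) ^ t)
      = ∫ y in Set.Ioo (0:ℝ) b, f y ^ (r * t) := by
    refine setIntegral_congr_fun measurableSet_Ioo fun y hy => ?_
    rw [← Real.rpow_mul (hpos y hy).le]
  congr 1
  refine setIntegral_congr_fun measurableSet_Ioo fun x hx => ?_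
  rw [hA, ← Real.rpow_mul (hpos x hx).le]

private lemma iteratedDerivWithin_congr_set' {F : ℝ → ℝ} {s t : Set ℝ} {x : ℝ}
    (h : s =ᶠ[nhds x] t) (n : ℕ) :
    iteratedDerivWithin n F s x = iteratedDerivWithin n F t x := by
  simp only [iteratedDerivWithin_eq_iteratedFDerivWithin,
    iteratedFDerivWithin_congr_set h n]

private lemma ico_eventuallyEq_ici {δ : ℝ} (hδ : 0 < δ) :
    Set.Ico (0:ℝ) δ =ᶠ[nhds (0:ℝ)] Set.Ici (0:ℝ) := by
  rw [Filter.eventuallyEq_set]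
  filter_upwards [Metric.ball_mem_nhds (0:ℝ) hδ] with x hx
  rw [Metric.mem_ball, Real.dist_eq, sub_zero] at hx
  constructor
  · exact fun h => h.1
  · exact fun h => ⟨h, lt_of_abs_lt hx⟩

private lemma iter_comp_mul {g : ℝ → ℝ} {r ε : ℝ} (hr : 0 < r) :
    ∀ n : ℕ, ContDiffOn ℝ n g (Set.Ico 0 ε) →
      ∀ x ∈ Set.Ico (0:ℝ) (ε / r),
        iteratedDerivWithin n (fun t => g (r * t)) (Set.Ico 0 (ε / r)) x =
          r ^ n * iteratedDerivWithin n g (Set.Ico 0 ε) (r * x) := by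
  have hmaps : Set.MapsTo (fun t => r * t) (Set.Ico (0:ℝ) (ε / r)) (Set.Ico (0:ℝ) ε) := by
    intro x hx
    exact ⟨mul_nonneg hr.le hx.1, by simpa [mul_comm] using (lt_div_iff₀ hr).mp hx.2⟩
  intro n
  induction n with
  | zero => intro _ x _; simp
  | succ n ih =>
    intro hg x hx
    have uds := uniqueDiffOn_Ico (0:ℝ) (ε / r)
    have udt := uniqueDiffOn_Ico (0:ℝ) ε
    have hrx : r * x ∈ Set.Ico (0:ℝ) ε := hmaps hx
    have ihn := ih (hg.of_le (by exact_mod_cast Nat.le_succ n))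
    rw [iteratedDerivWithin_succ]
    have hG : DifferentiableWithinAt ℝ (iteratedDerivWithin n g (Set.Ico 0 ε))
        (Set.Ico 0 ε) (r * x) := by
      refine hg.differentiableOn_iteratedDerivWithin ?_ udt (r * x) hrx
      exact_mod_cast Nat.lt_succ_self n
    have hinner : HasDerivWithinAt (fun t : ℝ => r * t) r (Set.Ico 0 (ε / r)) x := by
      simpa using ((hasDerivWithinAt_id x (Set.Ico 0 (ε / r))).const_mul r)
    have hcomp : HasDerivWithinAt
        (fun t => r ^ n * iteratedDerivWithin n g (Set.Ico 0 ε) (r * t))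
        (r ^ n * (derivWithin (iteratedDerivWithin n g (Set.Ico 0 ε)) (Set.Ico 0 ε) (r * x) * r))
        (Set.Ico 0 (ε / r)) x :=
      ((hG.hasDerivWithinAt.comp x hinner hmaps)).const_mul (r ^ n)
    have : derivWithin (iteratedDerivWithin n (fun t => g (r * t)) (Set.Ico 0 (ε / r)))
        (Set.Ico 0 (ε / r)) x
        = r ^ n * (derivWithin (iteratedDerivWithin n g (Set.Ico 0 ε)) (Set.Ico 0 ε) (r * x) * r) := by
      rw [derivWithin_congr (fun y hy => ihn y hy) (ihn x hx)]
      exact hcomp.derivWithin (uds x hx)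
    rw [this, pow_succ, iteratedDerivWithin_succ]
    ring

/-- If `f : (0,b) → (0,∞)` is monotone decreasing with
`∫₀^b f(x)^s dx < ∞` for some `s > 0`, `r > 0`, and the `n`-th slide derivative of `f`
(the `n`-th right-hand derivative of `σ_f` at `0`) exists, then the `n`-th slide derivative
of `f^r` exists and `ψₙ(f^r) = rⁿ ψₙ(f)`. -/
theorem slide_derivative_rpow (b s r : ℝ) (hb : 0 < b) (hs : 0 < s) (hr : 0 < r)
    (n : ℕ) (f : ℝ → ℝ) (hmono : AntitoneOn f (Set.Ioo (0:ℝ) b))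
    (hpos : ∀ x ∈ Set.Ioo (0:ℝ) b, 0 < f x)
    (hfs : IntegrableOn (fun x => f x ^ s) (Set.Ioo (0:ℝ) b))
    (hder : ContDiffWithinAt ℝ (n : ℕ∞) (slideFun b f) (Set.Ici 0) 0) :
    ContDiffWithinAt ℝ (n : ℕ∞) (slideFun b (fun x => f x ^ r)) (Set.Ici 0) 0 ∧
      iteratedDerivWithin n (slideFun b (fun x => f x ^ r)) (Set.Ici 0) 0 =
        r ^ n * iteratedDerivWithin n (slideFun b f) (Set.Ici 0) 0 := by
  have heq : slideFun b (fun x => f x ^ r) = fun t => slideFun b f (r * t) :=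
    funext (slideFun_rpow_eq b r f hpos)
  have hmaps : Set.MapsTo (fun t : ℝ => r * t) (Set.Ici (0:ℝ)) (Set.Ici (0:ℝ)) :=
    fun x hx => mul_nonneg hr.le hx
  have hder0 : ContDiffWithinAt ℝ (n : ℕ∞) (slideFun b f) (Set.Ici 0) (r * 0) := by
    rwa [mul_zero]
  have hcd : ContDiffWithinAt ℝ (n : ℕ∞) (slideFun b (fun x => f x ^ r)) (Set.Ici 0) 0 := by
    rw [heq]
    exact hder0.comp 0 ((contDiff_const.mul contDiff_id).contDiffWithinAt) hmaps
  refine ⟨hcd, ?_⟩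
  -- extract a set `Ico 0 ε` on which `slideFun b f` is `C^n`
  obtain ⟨u, huo, hu0, hgu⟩ := hder.contDiffOn' le_rfl (by simp)
  rw [Set.insert_eq_self.mpr Set.self_mem_Ici] at hgu
  obtain ⟨ε, hε, hball⟩ := Metric.isOpen_iff.mp huo 0 hu0
  have hico : Set.Ico (0:ℝ) ε ⊆ Set.Ici (0:ℝ) ∩ u := by
    intro x hx
    refine ⟨hx.1, hball ?_⟩
    rw [Metric.mem_ball, Real.dist_eq, sub_zero, abs_of_nonneg hx.1]
    exact hx.2
  have hg : ContDiffOn ℝ n (slideFun b f) (Set.Ico 0 ε) := hgu.mono hico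
  have hεr : 0 < ε / r := div_pos hε hr
  have h0mem : (0:ℝ) ∈ Set.Ico (0:ℝ) (ε / r) := ⟨le_refl 0, hεr⟩
  calc iteratedDerivWithin n (slideFun b (fun x => f x ^ r)) (Set.Ici 0) 0
      = iteratedDerivWithin n (fun t => slideFun b f (r * t)) (Set.Ico 0 (ε / r)) 0 := by
        rw [heq, iteratedDerivWithin_congr_set' ((ico_eventuallyEq_ici hεr)) n]
    _ = r ^ n * iteratedDerivWithin n (slideFun b f) (Set.Ico 0 ε) (r * 0) :=
        iter_comp_mul hr n hg 0 h0mem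
    _ = r ^ n * iteratedDerivWithin n (slideFun b f) (Set.Ici 0) 0 := by
        rw [mul_zero, iteratedDerivWithin_congr_set' (ico_eventuallyEq_ici hε) n]
end
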